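/- Let Q = {(x,y) ∈ ℝ² : x > 0 ∧ y > 0} ∪ {(0,0)} with the subspace topology. For t ≥ 0 define α_t : ℝ_{>0} → ℝ_{>0} by α_t(x) = min(1, t + ((x−t)/t)²) for t > 0 and α_0(x) = 1, and define f_t : Q → Q by f_t(0,0) = (0,0) and f_t(x,y) = α_t(y/x)·(x,y) otherwise. Then (t,(x,y)) ↦ f_t(x,y) is continuous on ℝ_{≥0} × Q, each f_t is a homeomorphism of Q, but the family of inverses is not continuous: along the path γ(t) = (t, t²) one has lim_{t→0} f_t⁻¹(γ(t)) = (1,0) ≠ (0,0) = f_0⁻¹(γ(0)). -/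

import Mathlib

open Set Filter

/-- The quarter-plane-with-origin `Q = {(x,y) : x > 0 ∧ y > 0} ∪ {(0,0)}`. -/
def Qset : Set (ℝ × ℝ) := {p | (0 < p.1 ∧ 0 < p.2) ∨ p = (0, 0)}

/-- `α_t(x) = min(1, t + ((x−t)/t)²)` for `t > 0`, and `α_t(x) = 1` otherwise. -/
noncomputable def alphaMap (t x : ℝ) : ℝ :=
  if 0 < t then min 1 (t + ((x - t) / t) ^ 2) else 1

theorem alphaMap_pos (t x : ℝ) : 0 < alphaMap t x := by
  unfold alphaMap
  split
  · exact lt_min one_pos (by linarith [sq_nonneg ((x - t) / t), ‹0 < t›])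
  · exact one_pos

/-- `f_t : Q → Q`, fixing the origin and scaling `(x,y)` by `α_t(y/x)` otherwise. -/
noncomputable def fQ (t : ℝ) (q : Qset) : Qset :=
  if h : (q : ℝ × ℝ) = (0, 0) then ⟨(0, 0), Or.inr rfl⟩
  else
    ⟨(alphaMap t (q.val.2 / q.val.1) * q.val.1, alphaMap t (q.val.2 / q.val.1) * q.val.2),
      Or.inl ⟨mul_pos (alphaMap_pos _ _) (q.property.resolve_right h).1,
        mul_pos (alphaMap_pos _ _) (q.property.resolve_right h).2⟩⟩

/- ------------------ auxiliary development ------------------ -/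

lemma alphaMap_le_one (t x : ℝ) : alphaMap t x ≤ 1 := by
  unfold alphaMap
  split
  · exact min_le_left _ _
  · exact le_rfl

/-- positive lower bound for `α_t`, uniform in `x`. -/
noncomputable def cA (t : ℝ) : ℝ := if 0 < t then min 1 t else 1

lemma cA_pos (t : ℝ) : 0 < cA t := by
  unfold cA; split
  · exact lt_min one_pos ‹0 < t›
  · exact one_pos

lemma cA_le_alphaMap (t x : ℝ) : cA t ≤ alphaMap t x := by
  unfold cA alphaMap
  split
  · exact min_le_min le_rfl (le_add_of_nonneg_right (sq_nonneg _))
  · exact le_rfl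

lemma Qx_nonneg (q : Qset) : 0 ≤ (q : ℝ × ℝ).1 := by
  rcases q.2 with h | h
  · exact h.1.le
  · rw [h]
lemma Qy_nonneg (q : Qset) : 0 ≤ (q : ℝ × ℝ).2 := by
  rcases q.2 with h | h
  · exact h.2.le
  · rw [h]

lemma fQ_val (t : ℝ) (q : Qset) :
    ((fQ t q : Qset) : ℝ × ℝ) =
      (alphaMap t ((q : ℝ × ℝ).2 / (q : ℝ × ℝ).1) * (q : ℝ × ℝ).1,
       alphaMap t ((q : ℝ × ℝ).2 / (q : ℝ × ℝ).1) * (q : ℝ × ℝ).2) := by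
  unfold fQ
  split
  · next h => rw [h]; simp
  · rfl

/-- the inverse map -/
noncomputable def gQ (t : ℝ) (q : Qset) : Qset :=
  if h : (q : ℝ × ℝ) = (0, 0) then ⟨(0, 0), Or.inr rfl⟩
  else
    ⟨((q : ℝ × ℝ).1 / alphaMap t ((q : ℝ × ℝ).2 / (q : ℝ × ℝ).1),
      (q : ℝ × ℝ).2 / alphaMap t ((q : ℝ × ℝ).2 / (q : ℝ × ℝ).1)),
      Or.inl ⟨div_pos (q.property.resolve_right h).1 (alphaMap_pos _ _),
        div_pos (q.property.resolve_right h).2 (alphaMap_pos _ _)⟩⟩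

lemma gQ_val (t : ℝ) (q : Qset) :
    ((gQ t q : Qset) : ℝ × ℝ) =
      ((q : ℝ × ℝ).1 / alphaMap t ((q : ℝ × ℝ).2 / (q : ℝ × ℝ).1),
       (q : ℝ × ℝ).2 / alphaMap t ((q : ℝ × ℝ).2 / (q : ℝ × ℝ).1)) := by
  unfold gQ
  split
  · next h => rw [h]; simp
  · rfl

lemma slope_fQ (t : ℝ) (q : Qset) :
    ((fQ t q : Qset) : ℝ × ℝ).2 / ((fQ t q : Qset) : ℝ × ℝ).1
      = (q : ℝ × ℝ).2 / (q : ℝ × ℝ).1 := by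
  rw [fQ_val]
  exact mul_div_mul_left _ _ (alphaMap_pos t _).ne'

lemma slope_gQ (t : ℝ) (q : Qset) :
    ((gQ t q : Qset) : ℝ × ℝ).2 / ((gQ t q : Qset) : ℝ × ℝ).1
      = (q : ℝ × ℝ).2 / (q : ℝ × ℝ).1 := by
  rw [gQ_val]
  simp only [div_eq_mul_inv]
  exact mul_div_mul_right _ _ (inv_ne_zero (alphaMap_pos t _).ne')

lemma gQ_fQ (t : ℝ) (q : Qset) : gQ t (fQ t q) = q := by
  apply Subtype.ext
  have hα := (alphaMap_pos t ((q : ℝ × ℝ).2 / (q : ℝ × ℝ).1)).ne'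
  rw [gQ_val, slope_fQ, fQ_val]
  simp only [mul_div_cancel_left₀ _ hα]

lemma fQ_gQ (t : ℝ) (q : Qset) : fQ t (gQ t q) = q := by
  apply Subtype.ext
  have hα := (alphaMap_pos t ((q : ℝ × ℝ).2 / (q : ℝ × ℝ).1)).ne'
  rw [fQ_val, slope_gQ, gQ_val]
  simp only [mul_div_cancel₀ _ hα]

/-- `α` is continuous in `x` for fixed `t`. -/
lemma alphaMap_cont (t : ℝ) : Continuous (alphaMap t) := by
  unfold alphaMap
  split
  · exact continuous_const.min
      (continuous_const.add (((continuous_id.sub continuous_const).div_const t).pow 2))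
  · exact continuous_const

/-- `α` is jointly continuous at `(t₀, s₀)` when `t₀ ≥ 0` and `s₀ > 0`. -/
lemma alphaMap_contAt {t₀ s₀ : ℝ} (ht : 0 ≤ t₀) (hs : 0 < s₀) :
    ContinuousAt (fun p : ℝ × ℝ => alphaMap p.1 p.2) (t₀, s₀) := by
  rcases ht.lt_or_eq with h | h
  · have hev : (fun p : ℝ × ℝ => alphaMap p.1 p.2) =ᶠ[nhds (t₀, s₀)]
        fun p => min 1 (p.1 + ((p.2 - p.1) / p.1) ^ 2) := by
      have hmem : {p : ℝ × ℝ | 0 < p.1} ∈ nhds (t₀, s₀) :=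
        (isOpen_lt continuous_const continuous_fst).mem_nhds h
      filter_upwards [hmem] with p hp
      simp only [alphaMap, if_pos hp]
    refine ContinuousAt.congr ?_ hev.symm
    exact continuousAt_const.min
      (continuousAt_fst.add
        (((continuousAt_snd.sub continuousAt_fst).div continuousAt_fst h.ne').pow 2))
  · subst h
    have h1 : {p : ℝ × ℝ | p.1 < s₀ / 4} ∈ nhds ((0 : ℝ), s₀) :=
      (isOpen_lt continuous_fst continuous_const).mem_nhds (show (0:ℝ) < s₀ / 4 by linarith)
    have h2 : {p : ℝ × ℝ | s₀ / 2 < p.2} ∈ nhds ((0 : ℝ), s₀) :=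
      (isOpen_lt continuous_const continuous_snd).mem_nhds (show s₀ / 2 < s₀ by linarith)
    have hev : (fun p : ℝ × ℝ => alphaMap p.1 p.2) =ᶠ[nhds ((0 : ℝ), s₀)] fun _ => 1 := by
      filter_upwards [h1, h2] with p hp1 hp2
      simp only [alphaMap]
      split
      · next hpt =>
        refine min_eq_left ?_
        have hge : 1 ≤ (p.2 - p.1) / p.1 := by
          rw [le_div_iff₀ hpt]
          linarith
        nlinarith
      · rfl
    exact ContinuousAt.congr continuousAt_const hev.symm

lemma fQ_joint_cont_val :
    Continuous (fun z : {t : ℝ // 0 ≤ t} × Qset => ((fQ z.1.val z.2 : Qset) : ℝ × ℝ)) := by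
  simp only [fQ_val]
  rw [continuous_iff_continuousAt]
  rintro ⟨t₀, q₀⟩
  have hcx : Continuous fun z : {t : ℝ // 0 ≤ t} × Qset => ((z.2 : ℝ × ℝ)).1 :=
    (continuous_subtype_val.comp continuous_snd).fst
  have hcy : Continuous fun z : {t : ℝ // 0 ≤ t} × Qset => ((z.2 : ℝ × ℝ)).2 :=
    (continuous_subtype_val.comp continuous_snd).snd
  by_cases hq : (q₀ : ℝ × ℝ) = (0, 0)
  · have hx : Tendsto (fun z : {t : ℝ // 0 ≤ t} × Qset => ((z.2 : ℝ × ℝ)).1)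
        (nhds (t₀, q₀)) (nhds 0) := by
      have := hcx.tendsto (t₀, q₀)
      simpa [hq] using this
    have hy : Tendsto (fun z : {t : ℝ // 0 ≤ t} × Qset => ((z.2 : ℝ × ℝ)).2)
        (nhds (t₀, q₀)) (nhds 0) := by
      have := hcy.tendsto (t₀, q₀)
      simpa [hq] using this
    have key : Tendsto (fun z : {t : ℝ // 0 ≤ t} × Qset =>
        (alphaMap z.1.val ((z.2 : ℝ × ℝ).2 / (z.2 : ℝ × ℝ).1) * (z.2 : ℝ × ℝ).1,
         alphaMap z.1.val ((z.2 : ℝ × ℝ).2 / (z.2 : ℝ × ℝ).1) * (z.2 : ℝ × ℝ).2))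
        (nhds (t₀, q₀)) (nhds ((0 : ℝ), (0 : ℝ))) := by
      refine Tendsto.prodMk_nhds ?_ ?_
      · refine tendsto_of_tendsto_of_tendsto_of_le_of_le tendsto_const_nhds hx
          (fun z => mul_nonneg (alphaMap_pos _ _).le (Qx_nonneg z.2))
          (fun z => mul_le_of_le_one_left (Qx_nonneg z.2) (alphaMap_le_one _ _))
      · refine tendsto_of_tendsto_of_tendsto_of_le_of_le tendsto_const_nhds hy
          (fun z => mul_nonneg (alphaMap_pos _ _).le (Qy_nonneg z.2))
          (fun z => mul_le_of_le_one_left (Qy_nonneg z.2) (alphaMap_le_one _ _))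
    unfold ContinuousAt
    convert key using 2
    simp [hq]
  · have hx0 : 0 < (q₀ : ℝ × ℝ).1 := (q₀.2.resolve_right hq).1
    have hy0 : 0 < (q₀ : ℝ × ℝ).2 := (q₀.2.resolve_right hq).2
    have hinner : ContinuousAt
        (fun z : {t : ℝ // 0 ≤ t} × Qset => (z.1.val, (z.2 : ℝ × ℝ).2 / (z.2 : ℝ × ℝ).1))
        (t₀, q₀) :=
      ((continuous_subtype_val.comp continuous_fst).continuousAt).prodMk
        ((hcy.continuousAt).div (hcx.continuousAt) hx0.ne')
    have hα := ContinuousAt.comp (x := ((t₀, q₀) : {t : ℝ // 0 ≤ t} × Qset))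
      (alphaMap_contAt t₀.2 (div_pos hy0 hx0)) hinner
    exact (hα.mul hcx.continuousAt).prodMk (hα.mul hcy.continuousAt)

lemma fQ_joint_cont : Continuous (fun z : {t : ℝ // 0 ≤ t} × Qset => fQ z.1.val z.2) :=
  continuous_induced_rng.2 fQ_joint_cont_val

lemma fQ_cont {t : ℝ} (ht : 0 ≤ t) : Continuous (fQ t) :=
  fQ_joint_cont.comp ((continuous_const (y := (⟨t, ht⟩ : {t : ℝ // 0 ≤ t}))).prodMk
    continuous_id)

lemma gQ_cont (t : ℝ) : Continuous (gQ t) := by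
  apply continuous_induced_rng.2
  show Continuous fun q : Qset => ((gQ t q : Qset) : ℝ × ℝ)
  simp only [gQ_val]
  rw [continuous_iff_continuousAt]
  intro q₀
  have hcx : Continuous fun q : Qset => (q : ℝ × ℝ).1 := continuous_subtype_val.fst
  have hcy : Continuous fun q : Qset => (q : ℝ × ℝ).2 := continuous_subtype_val.snd
  by_cases hq : (q₀ : ℝ × ℝ) = (0, 0)
  · have hx : Tendsto (fun q : Qset => (q : ℝ × ℝ).1 / cA t) (nhds q₀) (nhds 0) := by
      have := (hcx.div_const (cA t)).tendsto q₀
      simpa [hq] using this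
    have hy : Tendsto (fun q : Qset => (q : ℝ × ℝ).2 / cA t) (nhds q₀) (nhds 0) := by
      have := (hcy.div_const (cA t)).tendsto q₀
      simpa [hq] using this
    have key : Tendsto (fun q : Qset =>
        ((q : ℝ × ℝ).1 / alphaMap t ((q : ℝ × ℝ).2 / (q : ℝ × ℝ).1),
         (q : ℝ × ℝ).2 / alphaMap t ((q : ℝ × ℝ).2 / (q : ℝ × ℝ).1)))
        (nhds q₀) (nhds ((0 : ℝ), (0 : ℝ))) := by
      refine Tendsto.prodMk_nhds ?_ ?_
      · refine tendsto_of_tendsto_of_tendsto_of_le_of_le tendsto_const_nhds hx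
          (fun q => div_nonneg (Qx_nonneg q) (alphaMap_pos _ _).le)
          (fun q => div_le_div_of_nonneg_left (Qx_nonneg q) (cA_pos t) (cA_le_alphaMap t _))
      · refine tendsto_of_tendsto_of_tendsto_of_le_of_le tendsto_const_nhds hy
          (fun q => div_nonneg (Qy_nonneg q) (alphaMap_pos _ _).le)
          (fun q => div_le_div_of_nonneg_left (Qy_nonneg q) (cA_pos t) (cA_le_alphaMap t _))
    unfold ContinuousAt
    convert key using 2
    simp [hq]
  · have hx0 : 0 < (q₀ : ℝ × ℝ).1 := (q₀.2.resolve_right hq).1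
    have hα := ContinuousAt.comp (x := q₀) (f := fun q : Qset => (q : ℝ × ℝ).2 / (q : ℝ × ℝ).1)
      (alphaMap_cont t).continuousAt
      ((hcy.continuousAt).div (hcx.continuousAt) hx0.ne')
    exact (hcx.continuousAt.div hα (alphaMap_pos _ _).ne').prodMk
      (hcy.continuousAt.div hα (alphaMap_pos _ _).ne')

/-- each `f_t` (for `t ≥ 0`) is a homeomorphism of `Q`. -/
noncomputable def fHomeo (t : ℝ) (ht : 0 ≤ t) : Qset ≃ₜ Qset where
  toFun := fQ t
  invFun := gQ t
  left_inv := gQ_fQ t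
  right_inv := fQ_gQ t
  continuous_toFun := fQ_cont ht
  continuous_invFun := gQ_cont t

theorem stmt_1 :
    Continuous (fun z : {t : ℝ // 0 ≤ t} × Qset => fQ z.1.val z.2) ∧
    (∀ t : ℝ, 0 ≤ t → ∃ e : Qset ≃ₜ Qset, ∀ q, e q = fQ t q) ∧
    ∀ e : {t : ℝ // 0 ≤ t} → Qset ≃ₜ Qset, (∀ t q, e t q = fQ t.val q) →
      Tendsto
        (fun t : ℝ =>
          if ht : 0 < t then
            (((e ⟨t, ht.le⟩).symm ⟨(t, t ^ 2), Or.inl ⟨ht, pow_pos ht 2⟩⟩ : Qset) : ℝ × ℝ)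
          else (0, 0))
        (nhdsWithin 0 (Ioi 0)) (nhds (1, 0)) ∧
      (((e ⟨0, le_refl 0⟩).symm ⟨(0, 0), Or.inr rfl⟩ : Qset) : ℝ × ℝ) = (0, 0) := by
  refine ⟨fQ_joint_cont, fun t ht => ⟨fHomeo t ht, fun q => rfl⟩, ?_⟩
  intro e he
  have hsymm : ∀ (t : {t : ℝ // 0 ≤ t}) (q : Qset), (e t).symm q = gQ t.val q := by
    intro t q
    apply (e t).injective
    rw [Homeomorph.apply_symm_apply, he, fQ_gQ]
  constructor
  · have hev : (fun t : ℝ =>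
        if ht : 0 < t then
          (((e ⟨t, ht.le⟩).symm ⟨(t, t ^ 2), Or.inl ⟨ht, pow_pos ht 2⟩⟩ : Qset) : ℝ × ℝ)
        else (0, 0)) =ᶠ[nhdsWithin 0 (Ioi 0)] fun t : ℝ => ((1 : ℝ), t) := by
      have hmem : Ioo (0 : ℝ) 1 ∈ nhdsWithin (0 : ℝ) (Ioi 0) :=
        Ioo_mem_nhdsGT_of_mem ⟨le_rfl, one_pos⟩
      filter_upwards [hmem] with t ht
      obtain ⟨ht0, ht1⟩ := ht
      rw [dif_pos ht0, hsymm, gQ_val]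
      have h1 : t ^ 2 / t = t := by
        rw [pow_two, mul_div_assoc, div_self ht0.ne', mul_one]
      have hα : alphaMap t (((t, t ^ 2) : ℝ × ℝ).2 / ((t, t ^ 2) : ℝ × ℝ).1) = t := by
        simp only
        rw [h1]
        unfold alphaMap
        rw [if_pos ht0]
        simp [min_eq_right ht1.le]
      rw [hα]
      simp only
      rw [div_self ht0.ne', h1]
    refine Tendsto.congr' hev.symm ?_
    exact ((continuous_const.prodMk continuous_id).tendsto (0 : ℝ)).mono_left
      nhdsWithin_le_nhds
  · rw [hsymm, gQ_val]
    simp
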